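/- Let d ≥ 3 be an integer and λ, c > 0. Define f : ℝ^d × (0,∞) → ℝ on the open cone {(y,t) : ‖y‖ < ct, t > 0} by f(y,t) = Σ_{k=1}^∞ (λ/(2c))^{k(d-2)} (c²t² − ‖y‖²)^{(k(d−2)−2)/2} / (Γ(k(d/2 − 1)) · Γ((d−1)/2 + (d/2 − 1)k)). Then f satisfies the non-homogeneous iterated Klein–Gordon equation W^{(d−2)} f (y,t) = λ^{2(d−2)} f(y,t) + (2λc)^{d−2} (c²t² − ‖y‖²)^{−d/2} / (√π · Γ(1 − d/2)) on the open cone, where (W u)(y,t) = ∂²u/∂t² − c² Σ_{j=1}^d ∂²u/∂y_j², and where 1/Γ(1 − d/2) is interpreted as 0 when 1 − d/2 is a nonpositive integer (i.e. for even d ≥ 4 the inhomogeneous term vanishes). -/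

import Mathlib

open Real

/-- The d'Alembert (wave) operator `W u = ∂²u/∂t² - c² Σ_j ∂²u/∂y_j²` acting on
functions `u : ℝ^d × ℝ → ℝ`. -/
noncomputable def dAlembert (d : ℕ) (c : ℝ)
    (u : EuclideanSpace ℝ (Fin d) × ℝ → ℝ) :
    EuclideanSpace ℝ (Fin d) × ℝ → ℝ :=
  fun p =>
    iteratedDeriv 2 (fun s => u (p.1, s)) p.2
      - c ^ 2 * ∑ j : Fin d,
          iteratedDeriv 2 (fun s => u (WithLp.toLp 2 (Function.update p.1 j s), p.2)) (p.1 j)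


lemma gamma_inv_rec (u : ℝ) : u * (Real.Gamma (u+1))⁻¹ = (Real.Gamma u)⁻¹ := by
  rcases eq_or_ne u 0 with rfl | hu
  · simp [Real.Gamma_zero]
  rcases eq_or_ne (Real.Gamma u) 0 with h0 | hne
  · rw [h0, inv_zero]
    rw [Real.Gamma_eq_zero_iff] at h0
    obtain ⟨m, rfl⟩ := h0
    have hm : m ≠ 0 := by rintro rfl; simp at hu
    obtain ⟨n, rfl⟩ := Nat.exists_eq_succ_of_ne_zero hm
    have h1 : (-(n.succ:ℝ)) + 1 = -(n:ℝ) := by push_cast; ring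
    rw [h1, Real.Gamma_neg_nat_eq_zero, inv_zero, mul_zero]
  · rw [Real.Gamma_add_one hu, mul_inv, ← mul_assoc, mul_inv_cancel₀ hu, one_mul]

lemma gamma_ge_exp_neg_one {y : ℝ} (hy : 1 ≤ y) : Real.exp (-1) ≤ Real.Gamma y := by
  rw [Real.Gamma_eq_integral (by linarith)]
  have h1 : Real.exp (-1) = ∫ x in Set.Ioi (1:ℝ), Real.exp (-x) := by
    rw [integral_exp_neg_Ioi]
  rw [h1]
  have hint : MeasureTheory.IntegrableOn (fun x => Real.exp (-x) * x ^ (y-1)) (Set.Ioi 0) :=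
    Real.GammaIntegral_convergent (by linarith)
  calc (∫ x in Set.Ioi (1:ℝ), Real.exp (-x))
      ≤ ∫ x in Set.Ioi (1:ℝ), Real.exp (-x) * x ^ (y-1) := by
        apply MeasureTheory.setIntegral_mono_on
        · exact (exp_neg_integrableOn_Ioi 1 one_pos).congr_fun (by intro x _; simp) measurableSet_Ioi
        · exact hint.mono_set (fun x hx => Set.mem_Ioi.mpr (lt_trans one_pos (Set.mem_Ioi.mp hx)))
        · exact measurableSet_Ioi
        · intro x hx
          nth_rewrite 1 [← mul_one (Real.exp (-x))]
          apply mul_le_mul_of_nonneg_left _ (Real.exp_nonneg _)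
          exact Real.one_le_rpow (le_of_lt hx) (by linarith)
    _ ≤ ∫ x in Set.Ioi (0:ℝ), Real.exp (-x) * x ^ (y-1) := by
        apply MeasureTheory.setIntegral_mono_set hint
        · filter_upwards [MeasureTheory.ae_restrict_mem measurableSet_Ioi] with x hx
          exact mul_nonneg (Real.exp_nonneg _) (Real.rpow_nonneg (le_of_lt hx) _)
        · exact HasSubset.Subset.eventuallyLE (fun x hx => Set.mem_Ioi.mpr (lt_trans one_pos (Set.mem_Ioi.mp hx)))

/-- factorial lower bound: `n! ≤ e * Γ(y)` for `y ≥ n+1`. -/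
lemma factorial_le_exp_mul_gamma : ∀ (n : ℕ) (y : ℝ), (n:ℝ) + 1 ≤ y →
    (n.factorial : ℝ) ≤ Real.exp 1 * Real.Gamma y := by
  intro n
  induction n with
  | zero =>
    intro y hy
    norm_num
    have := gamma_ge_exp_neg_one (by push_cast at hy; linarith)
    rw [Real.exp_neg] at this
    calc (1:ℝ) = Real.exp 1 * (Real.exp 1)⁻¹ := by rw [mul_inv_cancel₀ (Real.exp_ne_zero 1)]
      _ ≤ Real.exp 1 * Real.Gamma y := by
          exact mul_le_mul_of_nonneg_left this (Real.exp_nonneg 1)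
  | succ n ih =>
    intro y hy
    have hy1 : (n:ℝ) + 1 ≤ y - 1 := by push_cast at hy ⊢; linarith
    have hy1' : (0:ℝ) < y - 1 := by by_contra h; push_cast at hy1; linarith [Nat.cast_nonneg (α := ℝ) n]
    have hG : Real.Gamma y = (y - 1) * Real.Gamma (y - 1) := by
      have := Real.Gamma_add_one (s := y - 1) (ne_of_gt hy1')
      rw [sub_add_cancel] at this
      exact this
    have h2 := ih (y-1) hy1
    calc ((n+1).factorial : ℝ) = ((n:ℝ)+1) * (n.factorial : ℝ) := by
          push_cast [Nat.factorial_succ]; ring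
      _ ≤ ((n:ℝ)+1) * (Real.exp 1 * Real.Gamma (y-1)) := by
          apply mul_le_mul_of_nonneg_left h2 (by positivity)
      _ ≤ (y-1) * (Real.exp 1 * Real.Gamma (y-1)) := by
          apply mul_le_mul_of_nonneg_right (by linarith)
          have := gamma_ge_exp_neg_one (by linarith : (1:ℝ) ≤ y - 1)
          positivity
      _ = Real.exp 1 * Real.Gamma y := by rw [hG]; ring

/-- exponential beats Gamma-inverse -/
lemma exists_rpow_le_gamma {q : ℝ} (hq : 1 ≤ q) :
    ∃ K : ℝ, 1 ≤ K ∧ ∀ y : ℝ, 1 ≤ y → q ^ y ≤ K * Real.Gamma y := by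
  have hq0 : (0:ℝ) < q := by linarith
  have htend : Filter.Tendsto (fun n : ℕ => Real.exp 1 * q^2 * (q ^ n / (n.factorial : ℝ)))
      Filter.atTop (nhds 0) := by
    have := FloorSemiring.tendsto_pow_div_factorial_atTop (K := ℝ) q
    simpa using (this.const_mul (Real.exp 1 * q^2))
  obtain ⟨n₀, hn₀⟩ := (Filter.eventually_atTop).1
    (htend.eventually_le_const (by norm_num : (0:ℝ) < 1))
  have key : ∀ n : ℕ, n₀ ≤ n → Real.exp 1 * q ^ ((n:ℝ) + 2) ≤ (n.factorial : ℝ) := by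
    intro n hn
    have h1 := hn₀ n hn
    have hfac : (0:ℝ) < (n.factorial : ℝ) := by exact_mod_cast Nat.factorial_pos n
    rw [mul_div_assoc', div_le_one hfac] at h1
    have : Real.exp 1 * q^2 * q^n ≤ (n.factorial:ℝ) := by nlinarith
    calc Real.exp 1 * q ^ ((n:ℝ) + 2) = Real.exp 1 * (q^n * q^2) := by
          rw [Real.rpow_add hq0, Real.rpow_natCast, Real.rpow_two]
      _ = Real.exp 1 * q^2 * q^n := by ring
      _ ≤ (n.factorial:ℝ) := this
  refine ⟨Real.exp 1 * q ^ ((n₀:ℝ) + 2), ?_, ?_⟩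
  · have h1 : (1:ℝ) ≤ q ^ ((n₀:ℝ) + 2) := Real.one_le_rpow hq (by positivity)
    nlinarith [Real.add_one_le_exp 1]
  intro y hy
  have hGpos : 0 < Real.Gamma y := Real.Gamma_pos_of_pos (by linarith)
  rcases le_or_gt y ((n₀:ℝ) + 2) with hcase | hcase
  · calc q ^ y ≤ q ^ ((n₀:ℝ) + 2) := Real.rpow_le_rpow_of_exponent_le hq hcase
      _ = (Real.exp 1 * q ^ ((n₀:ℝ)+2)) * Real.exp (-1) := by
          rw [Real.exp_neg]; field_simp
      _ ≤ (Real.exp 1 * q ^ ((n₀:ℝ)+2)) * Real.Gamma y := by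
          apply mul_le_mul_of_nonneg_left (gamma_ge_exp_neg_one hy) (by positivity)
  · set n : ℕ := ⌊y⌋₊ with hn
    have hy0 : (0:ℝ) ≤ y := by linarith
    have hfl : (n:ℝ) ≤ y := Nat.floor_le hy0
    have hfu : y < (n:ℝ) + 1 := Nat.lt_floor_add_one y
    have hnge : n₀ + 1 ≤ n := by
      have : ((n₀:ℝ) + 1) < (n:ℝ) + 1 := by linarith
      exact_mod_cast Nat.lt_add_one_iff.mp (by exact_mod_cast this)
    have hn1 : 1 ≤ n := le_trans (Nat.le_add_left 1 n₀) hnge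
    have hcast : ((n-1:ℕ):ℝ) = (n:ℝ) - 1 := by
      rw [Nat.cast_sub hn1]; norm_num
    have hkey := key (n-1) (by omega)
    have hfac := factorial_le_exp_mul_gamma (n-1) y (by rw [hcast]; linarith)
    have hexp : (0:ℝ) < Real.exp 1 := Real.exp_pos 1
    calc q ^ y ≤ q ^ ((n:ℝ) + 1) := Real.rpow_le_rpow_of_exponent_le hq (by linarith)
      _ = q ^ (((n-1:ℕ):ℝ) + 2) := by rw [hcast]; ring_nf
      _ ≤ ((n-1).factorial : ℝ) / Real.exp 1 := by
          rw [le_div_iff₀ hexp]; linarith [key (n-1) (by omega)]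
      _ ≤ Real.Gamma y := by rw [div_le_iff₀ hexp]; linarith
      _ ≤ (Real.exp 1 * q ^ ((n₀:ℝ)+2)) * Real.Gamma y := by
          nth_rewrite 1 [← one_mul (Real.Gamma y)]
          apply mul_le_mul_of_nonneg_right _ (le_of_lt hGpos)
          have h1 : (1:ℝ) ≤ q ^ ((n₀:ℝ) + 2) := Real.one_le_rpow hq (by positivity)
          nlinarith [Real.add_one_le_exp 1]

lemma summable_gamma_aux {μ : ℝ} (hμ : 0 < μ) (δ₁ δ₂ : ℝ) {B : ℝ} (hB : 0 < B) :
    Summable (fun k : ℕ => B^k * |(Real.Gamma (((k:ℝ)+1)*μ + δ₁))⁻¹|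
      * |(Real.Gamma (((k:ℝ)+1)*μ + δ₂))⁻¹|) := by
  set q : ℝ := (2*B+2) ^ (1/μ) with hqdef
  have h2B : (1:ℝ) ≤ 2*B+2 := by linarith
  have hq1 : 1 ≤ q := Real.one_le_rpow h2B (by positivity)
  have hq0 : (0:ℝ) < q := by linarith
  have hqμ : q ^ μ = 2*B+2 := by
    rw [hqdef, ← Real.rpow_mul (by linarith : (0:ℝ) ≤ 2*B+2),
      one_div, inv_mul_cancel₀ (ne_of_gt hμ), Real.rpow_one]
  obtain ⟨K, hK1, hK⟩ := exists_rpow_le_gamma hq1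
  obtain ⟨N, hN⟩ := exists_nat_ge ((1 + |δ₁| + |δ₂|) / μ)
  have harg : ∀ k : ℕ, N ≤ k → 1 ≤ ((k:ℝ)+1)*μ + δ₁ ∧ 1 ≤ ((k:ℝ)+1)*μ + δ₂ := by
    intro k hk
    have hkN : ((N:ℝ)) ≤ (k:ℝ) := by exact_mod_cast hk
    have h1 : (1 + |δ₁| + |δ₂|) ≤ (k:ℝ) * μ := by
      rw [div_le_iff₀ hμ] at hN; nlinarith
    have hd1 : -|δ₁| ≤ δ₁ := neg_abs_le δ₁
    have hd2 : -|δ₂| ≤ δ₂ := neg_abs_le δ₂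
    constructor <;> nlinarith [abs_nonneg δ₁, abs_nonneg δ₂]
  apply summable_of_isBigO_nat (g := fun k : ℕ => ((1:ℝ)/2)^k)
  · exact summable_geometric_of_lt_one (by norm_num) (by norm_num)
  · rw [Asymptotics.isBigO_iff]
    refine ⟨K * Real.exp 1 / q ^ (μ + δ₁), ?_⟩
    filter_upwards [Filter.eventually_atTop.2 ⟨N, fun k hk => harg k hk⟩] with k hk
    obtain ⟨h1, h2⟩ := hk
    have hG1 : 0 < Real.Gamma (((k:ℝ)+1)*μ + δ₁) := Real.Gamma_pos_of_pos (by linarith)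
    have hG2 : 0 < Real.Gamma (((k:ℝ)+1)*μ + δ₂) := Real.Gamma_pos_of_pos (by linarith)
    have hb1 : |(Real.Gamma (((k:ℝ)+1)*μ + δ₁))⁻¹| ≤ K / q ^ (((k:ℝ)+1)*μ + δ₁) := by
      rw [abs_of_pos (inv_pos.2 hG1), inv_eq_one_div,
        div_le_div_iff₀ hG1 (by positivity : (0:ℝ) < q ^ (((k:ℝ)+1)*μ + δ₁))]
      have := hK _ h1
      linarith
    have hb2 : |(Real.Gamma (((k:ℝ)+1)*μ + δ₂))⁻¹| ≤ Real.exp 1 := by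
      rw [abs_of_pos (inv_pos.2 hG2)]
      have h3 : (Real.Gamma (((k:ℝ)+1)*μ + δ₂))⁻¹ ≤ (Real.exp (-1))⁻¹ :=
        inv_anti₀ (Real.exp_pos _) (gamma_ge_exp_neg_one h2)
      rwa [Real.exp_neg, inv_inv] at h3
    have hqsplit : q ^ (((k:ℝ)+1)*μ + δ₁) = (2*B+2)^k * q ^ (μ + δ₁) := by
      have : ((k:ℝ)+1)*μ + δ₁ = μ*(k:ℝ) + (μ + δ₁) := by ring
      rw [this, Real.rpow_add hq0]
      congr 1
      rw [Real.rpow_mul (le_of_lt hq0), hqμ, Real.rpow_natCast]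
    have hnorm1 : ‖B^k * |(Real.Gamma (((k:ℝ)+1)*μ + δ₁))⁻¹|
        * |(Real.Gamma (((k:ℝ)+1)*μ + δ₂))⁻¹|‖
        = B^k * |(Real.Gamma (((k:ℝ)+1)*μ + δ₁))⁻¹|
        * |(Real.Gamma (((k:ℝ)+1)*μ + δ₂))⁻¹| := by
      rw [Real.norm_eq_abs, abs_of_nonneg]
      positivity
    rw [hnorm1]
    have hnorm2 : ‖((1:ℝ)/2)^k‖ = ((1:ℝ)/2)^k := by
      rw [Real.norm_eq_abs, abs_of_nonneg (by positivity)]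
    rw [hnorm2]
    have hqpos : (0:ℝ) < q ^ (μ + δ₁) := Real.rpow_pos_of_pos hq0 _
    have step1 : B^k * |(Real.Gamma (((k:ℝ)+1)*μ + δ₁))⁻¹|
        * |(Real.Gamma (((k:ℝ)+1)*μ + δ₂))⁻¹|
        ≤ B^k * (K / q ^ (((k:ℝ)+1)*μ + δ₁)) * Real.exp 1 := by
      apply mul_le_mul _ hb2 (abs_nonneg _) (by positivity)
      exact mul_le_mul_of_nonneg_left hb1 (by positivity)
    refine le_trans step1 ?_
    rw [hqsplit]
    have hBk : B^k / (2*B+2)^k ≤ (1/2:ℝ)^k := by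
      rw [← div_pow]
      apply pow_le_pow_left₀ (by positivity)
      rw [div_le_div_iff₀ (by linarith) (by norm_num)]
      linarith
    have h2Bk : (0:ℝ) < (2*B+2)^k := by positivity
    calc B^k * (K / ((2*B+2)^k * q ^ (μ + δ₁))) * Real.exp 1
        = (K * Real.exp 1 / q ^ (μ + δ₁)) * (B^k / (2*B+2)^k) := by
          field_simp
      _ ≤ (K * Real.exp 1 / q ^ (μ + δ₁)) * (1/2:ℝ)^k := by
          apply mul_le_mul_of_nonneg_left hBk (by positivity)

noncomputable def hterm (d : ℕ) (lam c : ℝ) (r q : ℝ) (k : ℕ) (x : ℝ) : ℝ :=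
  ((lam/(2*c))^(d-2))^(k+1) * x ^ (((k:ℝ)+1)*((d:ℝ)/2-1) - 1 - r) *
    ((Real.Gamma (((k:ℝ)+1)*((d:ℝ)/2-1) - r))⁻¹ *
     (Real.Gamma (((d:ℝ)-1)/2 + ((k:ℝ)+1)*((d:ℝ)/2-1) - q))⁻¹)

noncomputable def hfun (d : ℕ) (lam c : ℝ) (r q : ℝ) (x : ℝ) : ℝ :=
  ∑' k : ℕ, hterm d lam c r q k x

section params
variable {d : ℕ} {lam c : ℝ}

lemma mu_pos (hd : 3 ≤ d) : 0 < (d:ℝ)/2 - 1 := by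
  have : (3:ℝ) ≤ (d:ℝ) := by exact_mod_cast hd
  linarith

lemma C_pos (hlam : 0 < lam) (hc : 0 < c) : 0 < (lam/(2*c))^(d-2) := by positivity

/-- master bound with summable dominating sequence on `[ε, M]` -/
lemma hterm_bound (hd : 3 ≤ d) (hlam : 0 < lam) (hc : 0 < c) (r q : ℝ) {ε M : ℝ}
    (hε : 0 < ε) (hεM : ε ≤ M) :
    ∃ u : ℕ → ℝ, Summable u ∧ ∀ k : ℕ, ∀ x ∈ Set.Icc ε M, |hterm d lam c r q k x| ≤ u k := by
  set μ : ℝ := (d:ℝ)/2 - 1 with hμdef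
  have hμ : 0 < μ := mu_pos hd
  set C : ℝ := (lam/(2*c))^(d-2) with hCdef
  have hC : 0 < C := C_pos hlam hc
  have hM : 0 < M := lt_of_lt_of_le hε hεM
  set P : ℝ := C * M ^ μ * M^(-1-r) + C * ε ^ μ * ε^(-1-r) with hPdef
  have hP : 0 < P := by positivity
  set B : ℝ := C * (M ^ μ + ε ^ μ) with hBdef
  have hB : 0 < B := by positivity
  set u : ℕ → ℝ := fun k =>
    P * (B^k * |(Real.Gamma (((k:ℝ)+1)*μ + (-r)))⁻¹|
        * |(Real.Gamma (((k:ℝ)+1)*μ + (((d:ℝ)-1)/2 - q)))⁻¹|) with hudef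
  refine ⟨u, ?_, ?_⟩
  · exact (summable_gamma_aux hμ (-r) (((d:ℝ)-1)/2 - q) hB).mul_left _
  intro k x hx
  obtain ⟨hx1, hx2⟩ := hx
  have hx0 : 0 < x := lt_of_lt_of_le hε hx1
  set e : ℝ := ((k:ℝ)+1)*μ - 1 - r with hedef
  have hxe : x ^ e ≤ M^e + ε^e := by
    rcases le_or_gt 0 e with he | he
    · have h1 : x ^ e ≤ M^e := Real.rpow_le_rpow (le_of_lt hx0) hx2 he
      have h2 : (0:ℝ) ≤ ε^e := Real.rpow_nonneg (le_of_lt hε) _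
      linarith
    · have h1 : x ^ e ≤ ε^e := Real.rpow_le_rpow_of_nonpos hε hx1 (le_of_lt he)
      have h2 : (0:ℝ) ≤ M^e := Real.rpow_nonneg (le_of_lt hM) _
      linarith
  have expand : ∀ y : ℝ, 0 < y → C^(k+1) * y^e = (C * y^μ * y^(-1-r)) * (C * y^μ)^k := by
    intro y hy
    have h1 : e = μ*(k:ℝ) + μ + (-1-r) := by rw [hedef]; ring
    rw [h1, Real.rpow_add hy, Real.rpow_add hy, pow_succ, mul_pow,
      ← Real.rpow_natCast (y^μ) k, ← Real.rpow_mul (le_of_lt hy)]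
    ring
  have habs : |hterm d lam c r q k x| = C^(k+1) * x ^ e *
      (|(Real.Gamma (((k:ℝ)+1)*μ + (-r)))⁻¹| *
       |(Real.Gamma (((k:ℝ)+1)*μ + (((d:ℝ)-1)/2 - q)))⁻¹|) := by
    have harg1 : ((k:ℝ)+1)*μ - r = ((k:ℝ)+1)*μ + (-r) := by ring
    have harg2 : ((d:ℝ)-1)/2 + ((k:ℝ)+1)*μ - q = ((k:ℝ)+1)*μ + (((d:ℝ)-1)/2 - q) := by ring
    rw [hterm, harg1, harg2, abs_mul, abs_mul, abs_of_pos (pow_pos hC _),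
      abs_of_pos (Real.rpow_pos_of_pos hx0 _), abs_mul]
  rw [habs]
  set G : ℝ := |(Real.Gamma (((k:ℝ)+1)*μ + (-r)))⁻¹| *
       |(Real.Gamma (((k:ℝ)+1)*μ + (((d:ℝ)-1)/2 - q)))⁻¹| with hGdef
  have hG0 : 0 ≤ G := by positivity
  have step1 : C^(k+1) * x ^ e * G ≤ (C^(k+1) * (M^e + ε^e)) * G := by
    apply mul_le_mul_of_nonneg_right _ hG0
    exact mul_le_mul_of_nonneg_left hxe (by positivity)
  refine le_trans step1 ?_
  have step2 : C^(k+1) * (M^e + ε^e) ≤ P * B^k := by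
    have hMk : (C * M^μ)^k ≤ B^k := by
      apply pow_le_pow_left₀ (by positivity)
      rw [hBdef]
      nlinarith [Real.rpow_nonneg (le_of_lt hε) μ, Real.rpow_nonneg (le_of_lt hM) μ]
    have hεk : (C * ε^μ)^k ≤ B^k := by
      apply pow_le_pow_left₀ (by positivity)
      rw [hBdef]
      nlinarith [Real.rpow_nonneg (le_of_lt hε) μ, Real.rpow_nonneg (le_of_lt hM) μ]
    have e1 := expand M hM
    have e2 := expand ε hε
    have hp1 : (0:ℝ) ≤ C * M^μ * M^(-1-r) := by positivity
    have hp2 : (0:ℝ) ≤ C * ε^μ * ε^(-1-r) := by positivity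
    calc C^(k+1) * (M^e + ε^e) = (C * M^μ * M^(-1-r)) * (C * M^μ)^k
          + (C * ε^μ * ε^(-1-r)) * (C * ε^μ)^k := by rw [mul_add, e1, e2]
      _ ≤ (C * M^μ * M^(-1-r)) * B^k + (C * ε^μ * ε^(-1-r)) * B^k := by
          have := mul_le_mul_of_nonneg_left hMk hp1
          have := mul_le_mul_of_nonneg_left hεk hp2
          linarith
      _ = P * B^k := by rw [hPdef]; ring
  calc C^(k+1) * (M^e + ε^e) * G ≤ P * B^k * G := mul_le_mul_of_nonneg_right step2 hG0
    _ = u k := by rw [hudef, hGdef]; ring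

end params

section params
variable {d : ℕ} {lam c : ℝ}

lemma hterm_summable (hd : 3 ≤ d) (hlam : 0 < lam) (hc : 0 < c) (r q : ℝ) {x : ℝ}
    (hx : 0 < x) : Summable (fun k => hterm d lam c r q k x) := by
  obtain ⟨u, hu, hb⟩ := hterm_bound hd hlam hc r q hx (le_refl x)
  refine Summable.of_abs ?_
  exact Summable.of_nonneg_of_le (fun k => abs_nonneg _)
    (fun k => hb k x ⟨le_refl x, le_refl x⟩) hu

lemma hterm_hasDerivAt (r q : ℝ) (k : ℕ) {x : ℝ} (hx : 0 < x) :
    HasDerivAt (fun y => hterm d lam c r q k y) (hterm d lam c (r+1) q k x) x := by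
  set μ : ℝ := (d:ℝ)/2 - 1 with hμdef
  set A : ℝ := ((lam/(2*c))^(d-2))^(k+1) with hAdef
  set e : ℝ := ((k:ℝ)+1)*μ - 1 - r with hedef
  set G : ℝ := (Real.Gamma (((k:ℝ)+1)*μ - r))⁻¹ *
     (Real.Gamma (((d:ℝ)-1)/2 + ((k:ℝ)+1)*μ - q))⁻¹ with hGdef
  have h0 : HasDerivAt (fun y : ℝ => y ^ e) (e * x ^ (e-1)) x :=
    Real.hasDerivAt_rpow_const (Or.inl (ne_of_gt hx))
  have h1 : HasDerivAt (fun y => A * y ^ e * G) (A * (e * x ^ (e-1)) * G) x :=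
    (h0.const_mul A).mul_const G
  have h2 : (fun y => hterm d lam c r q k y) = (fun y => A * y ^ e * G) := by
    funext y; rw [hterm]
  rw [h2]
  convert h1 using 1
  rw [hterm, hGdef]
  have harg1 : ((k:ℝ)+1)*μ - (r+1) = e := by rw [hedef]; ring
  have harg2 : ((k:ℝ)+1)*μ - 1 - (r+1) = e - 1 := by rw [hedef]; ring
  have harg3 : ((k:ℝ)+1)*μ - r = e + 1 := by rw [hedef]; ring
  rw [harg1, harg2, harg3, ← gamma_inv_rec e]
  ring

end params

section params2
variable {d : ℕ} {lam c : ℝ}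

lemma hfun_hasDerivAt (hd : 3 ≤ d) (hlam : 0 < lam) (hc : 0 < c) (r q : ℝ) {x : ℝ}
    (hx : 0 < x) :
    HasDerivAt (hfun d lam c r q) (hfun d lam c (r+1) q x) x := by
  obtain ⟨u, hu, hb⟩ := hterm_bound hd hlam hc (r+1) q (half_pos hx) (by linarith : x/2 ≤ 2*x)
  have hmem : x ∈ Set.Ioo (x/2) (2*x) := ⟨by linarith, by linarith⟩
  have := hasDerivAt_tsum_of_isPreconnected hu isOpen_Ioo
    (isPreconnected_Ioo (a := x/2) (b := 2*x))
    (fun k y hy => hterm_hasDerivAt (d := d) (lam := lam) (c := c) r q k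
      (lt_trans (half_pos hx) hy.1))
    (fun k y hy => by
      rw [Real.norm_eq_abs]
      exact hb k y ⟨le_of_lt hy.1, le_of_lt hy.2⟩)
    hmem (hterm_summable hd hlam hc r q hx) hmem
  exact this

end params2

section params3
variable {d : ℕ} {lam c : ℝ}

lemma hterm_functional (r : ℝ) (k : ℕ) {x : ℝ} (hx : 0 < x) :
    x * hterm d lam c (r+2) r k x + ((d:ℝ)+1)/2 * hterm d lam c (r+1) r k x
      = hterm d lam c (r+1) (r+1) k x := by
  set μ : ℝ := (d:ℝ)/2 - 1 with hμdef
  set A : ℝ := ((lam/(2*c))^(d-2))^(k+1) with hAdef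
  set s : ℝ := ((k:ℝ)+1)*μ - r - 2 with hsdef
  rw [hterm, hterm, hterm]
  have e1 : ((k:ℝ)+1)*μ - 1 - (r+2) = s - 1 := by rw [hsdef]; ring
  have e2 : ((k:ℝ)+1)*μ - (r+2) = s := by rw [hsdef]; ring
  have e3 : ((k:ℝ)+1)*μ - 1 - (r+1) = s := by rw [hsdef]; ring
  have e4 : ((k:ℝ)+1)*μ - (r+1) = s + 1 := by rw [hsdef]; ring
  rw [e1, e2, e3, e4]
  set v : ℝ := ((d:ℝ)-1)/2 + ((k:ℝ)+1)*μ - (r+1) with hvdef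
  have e5 : ((d:ℝ)-1)/2 + ((k:ℝ)+1)*μ - r = v + 1 := by rw [hvdef]; ring
  rw [e5]
  have key1 : (Real.Gamma s)⁻¹ = s * (Real.Gamma (s+1))⁻¹ := (gamma_inv_rec s).symm
  have key2 : (Real.Gamma v)⁻¹ = v * (Real.Gamma (v+1))⁻¹ := (gamma_inv_rec v).symm
  rw [key1, key2]
  have ex : x * x ^ (s-1) = x ^ s := by
    conv_rhs => rw [show s = (s-1)+1 by ring]
    rw [Real.rpow_add_one (ne_of_gt hx)]
    ring
  have hv : v = s + ((d:ℝ)+1)/2 := by rw [hvdef, hsdef, hμdef]; ring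
  linear_combination (A * (Real.Gamma (s+1))⁻¹ * (Real.Gamma (v+1))⁻¹ * s) * ex
    - (A * x^s * (Real.Gamma (s+1))⁻¹ * (Real.Gamma (v+1))⁻¹) * hv
end params3

section params4
variable {d : ℕ} {lam c : ℝ}

lemma hfun_functional (hd : 3 ≤ d) (hlam : 0 < lam) (hc : 0 < c) (r : ℝ) {x : ℝ}
    (hx : 0 < x) :
    x * hfun d lam c (r+2) r x + ((d:ℝ)+1)/2 * hfun d lam c (r+1) r x
      = hfun d lam c (r+1) (r+1) x := by
  rw [hfun, hfun, hfun, ← tsum_mul_left, ← tsum_mul_left,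
    ← Summable.tsum_add ((hterm_summable hd hlam hc (r+2) r hx).mul_left x)
      ((hterm_summable hd hlam hc (r+1) r hx).mul_left (((d:ℝ)+1)/2))]
  exact tsum_congr (fun k => hterm_functional r k hx)

/-- second-derivative of a 1d slice `s ↦ hfun (α s² + β)` -/
lemma slice_iteratedDeriv (hd : 3 ≤ d) (hlam : 0 < lam) (hc : 0 < c) (r q : ℝ)
    (α β t : ℝ) (hx : 0 < α*t^2+β) :
    iteratedDeriv 2 (fun s => hfun d lam c r q (α*s^2+β)) t
      = hfun d lam c (r+2) q (α*t^2+β) * (2*α*t)^2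
        + hfun d lam c (r+1) q (α*t^2+β) * (2*α) := by
  set U : Set ℝ := {s | 0 < α*s^2+β} with hUdef
  have hUopen : IsOpen U := isOpen_lt continuous_const (by continuity)
  have htU : t ∈ U := hx
  have hinner : ∀ s : ℝ, HasDerivAt (fun s => α*s^2+β) (2*α*s) s := by
    intro s
    have h1 := ((hasDerivAt_pow 2 s).const_mul α).add_const β
    have h2 : α * ((2:ℕ) * s ^ (2-1)) = 2*α*s := by norm_num; ring
    rwa [h2] at h1
  have hD1 : ∀ s ∈ U, HasDerivAt (fun s => hfun d lam c r q (α*s^2+β))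
      (hfun d lam c (r+1) q (α*s^2+β) * (2*α*s)) s := by
    intro s hs
    have := (hfun_hasDerivAt hd hlam hc r q hs).comp s (hinner s)
    exact this
  -- deriv agrees with the nice function on U
  have hEq : Set.EqOn (deriv (fun s => hfun d lam c r q (α*s^2+β)))
      (fun s => hfun d lam c (r+1) q (α*s^2+β) * (2*α*s)) U := by
    intro s hs
    exact (hD1 s hs).deriv
  have hEvEq : deriv (fun s => hfun d lam c r q (α*s^2+β))
      =ᶠ[nhds t] (fun s => hfun d lam c (r+1) q (α*s^2+β) * (2*α*s)) :=
    Filter.eventuallyEq_of_mem (hUopen.mem_nhds htU) hEq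
  have hD2 : HasDerivAt (fun s => hfun d lam c (r+1) q (α*s^2+β) * (2*α*s))
      (hfun d lam c (r+2) q (α*t^2+β) * (2*α*t) * (2*α*t)
        + hfun d lam c (r+1) q (α*t^2+β) * (2*α)) t := by
    have ha : HasDerivAt (fun s => hfun d lam c (r+1) q (α*s^2+β))
        (hfun d lam c (r+2) q (α*t^2+β) * (2*α*t)) t :=
      by
        have := (hfun_hasDerivAt hd hlam hc (r+1) q hx).comp t (hinner t)
        have e : r+1+1 = r+2 := by ring
        rw [e] at this
        exact this
    have hb : HasDerivAt (fun s : ℝ => 2*α*s) (2*α) t := by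
      simpa using (hasDerivAt_id t).const_mul (2*α)
    exact ha.mul hb
  rw [iteratedDeriv_succ, iteratedDeriv_one]
  rw [hEvEq.deriv_eq]
  rw [hD2.deriv]
  ring

end params4

section multi
variable {d : ℕ}

lemma norm_sq_eq (y : EuclideanSpace ℝ (Fin d)) : ‖y‖^2 = ∑ j, (y j)^2 := by
  rw [EuclideanSpace.norm_eq]
  rw [Real.sq_sqrt (by positivity)]
  congr 1
  funext j
  rw [Real.norm_eq_abs, sq_abs]

lemma norm_sq_update (y z : EuclideanSpace ℝ (Fin d)) (j : Fin d) (s : ℝ)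
    (hz : ∀ i, z i = if i = j then s else y i) :
    ‖z‖^2 = ‖y‖^2 - (y j)^2 + s^2 := by
  have h1 : ∑ i, (z i)^2 = ∑ i, Function.update (fun i => (y i)^2) j (s^2) i := by
    apply Finset.sum_congr rfl
    intro i _
    rw [hz i, Function.update_apply]
    by_cases h : i = j <;> simp [h]
  have h2 : ∑ i, (y i)^2 = (y j)^2 + ∑ i ∈ Finset.univ \ {j}, (y i)^2 := by
    rw [Finset.sum_eq_add_sum_sdiff_singleton_of_mem (Finset.mem_univ j)]
  calc ‖z‖^2 = ∑ i, (z i)^2 := norm_sq_eq _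
    _ = ∑ i, Function.update (fun i => (y i)^2) j (s^2) i := h1
    _ = s^2 + ∑ i ∈ Finset.univ \ {j}, (y i)^2 := Finset.sum_update_of_mem (Finset.mem_univ j) _ _
    _ = ‖y‖^2 - (y j)^2 + s^2 := by rw [norm_sq_eq y, h2]; ring

lemma continuous_update_slice (y : EuclideanSpace ℝ (Fin d)) (j : Fin d) :
    Continuous (fun s : ℝ => WithLp.toLp 2 (Function.update y j s)) := by
  exact (PiLp.continuous_toLp 2 _).comp (continuous_const.update j continuous_id)

end multi

section cong
variable {d : ℕ} {c : ℝ}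

lemma iteratedDeriv_two_congr {g1 g2 : ℝ → ℝ} {x : ℝ} (h : g1 =ᶠ[nhds x] g2) :
    iteratedDeriv 2 g1 x = iteratedDeriv 2 g2 x := by
  rw [iteratedDeriv_succ, iteratedDeriv_one, iteratedDeriv_succ, iteratedDeriv_one]
  exact (h.deriv).deriv_eq

lemma dAlembert_congr {u v : EuclideanSpace ℝ (Fin d) × ℝ → ℝ}
    {p : EuclideanSpace ℝ (Fin d) × ℝ} (h : u =ᶠ[nhds p] v) :
    dAlembert d c u p = dAlembert d c v p := by
  rw [dAlembert, dAlembert]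
  congr 1
  · apply iteratedDeriv_two_congr
    have ht : Filter.Tendsto (fun s : ℝ => (p.1, s)) (nhds p.2) (nhds p) := by
      rw [← @Prod.mk.eta _ _ p]
      exact Filter.Tendsto.prodMk_nhds tendsto_const_nhds Filter.tendsto_id
    exact h.comp_tendsto ht
  · congr 1
    apply Finset.sum_congr rfl
    intro j _
    apply iteratedDeriv_two_congr
    have ht : Filter.Tendsto (fun s : ℝ => ((WithLp.toLp 2 (Function.update p.1 j s) : EuclideanSpace ℝ (Fin d)), p.2))
        (nhds (p.1 j)) (nhds p) := by
      have h1 : Filter.Tendsto (fun s : ℝ => (WithLp.toLp 2 (Function.update p.1 j s) : EuclideanSpace ℝ (Fin d)))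
          (nhds (p.1 j)) (nhds p.1) := by
        have h2 := (continuous_update_slice p.1 j).tendsto (p.1 j)
        have h3 : (WithLp.toLp 2 (Function.update p.1 j (p.1 j)) : EuclideanSpace ℝ (Fin d)) = p.1 := by
          simp
        rwa [h3] at h2
      rw [← @Prod.mk.eta _ _ p]
      exact Filter.Tendsto.prodMk_nhds h1 tendsto_const_nhds
    exact h.comp_tendsto ht

lemma dAlembert_const_mul (K : ℝ) (u : EuclideanSpace ℝ (Fin d) × ℝ → ℝ)
    (p : EuclideanSpace ℝ (Fin d) × ℝ) :
    dAlembert d c (fun q => K * u q) p = K * dAlembert d c u p := by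
  have h2 : ∀ g : ℝ → ℝ, ∀ x : ℝ, iteratedDeriv 2 (fun s => K * g s) x
      = K * iteratedDeriv 2 g x := by
    intro g x
    rw [iteratedDeriv_succ, iteratedDeriv_one, iteratedDeriv_succ, iteratedDeriv_one]
    have : deriv (fun s => K * g s) = fun s => K * deriv g s := by
      funext s
      exact deriv_const_mul_field K
    rw [this, deriv_const_mul_field K]
  rw [dAlembert, dAlembert, h2]
  have : ∀ j : Fin d, iteratedDeriv 2 (fun s => K * u (WithLp.toLp 2 (Function.update p.1 j s), p.2)) (p.1 j)
      = K * iteratedDeriv 2 (fun s => u (WithLp.toLp 2 (Function.update p.1 j s), p.2)) (p.1 j) :=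
    fun j => h2 _ _
  rw [Finset.sum_congr rfl (fun j _ => this j), ← Finset.mul_sum]
  ring

end cong

section m
variable {d : ℕ} {lam c : ℝ}

lemma dAlembert_hfun (hd : 3 ≤ d) (hlam : 0 < lam) (hc : 0 < c) (r : ℝ)
    (y : EuclideanSpace ℝ (Fin d)) (t : ℝ) (hX : 0 < c^2*t^2 - ‖y‖^2) :
    dAlembert d c (fun p => hfun d lam c r r (c^2*p.2^2 - ‖p.1‖^2)) (y, t)
      = (4*c^2) * hfun d lam c (r+1) (r+1) (c^2*t^2 - ‖y‖^2) := by
  set X : ℝ := c^2*t^2 - ‖y‖^2 with hXdef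
  set F : EuclideanSpace ℝ (Fin d) × ℝ → ℝ :=
    fun p => hfun d lam c r r (c^2*p.2^2 - ‖p.1‖^2) with hF
  rw [dAlembert]
  have hA : iteratedDeriv 2 (fun s => F ((y, t).1, s)) ((y, t).2)
      = hfun d lam c (r+2) r X * (2*c^2*t)^2 + hfun d lam c (r+1) r X * (2*c^2) := by
    have hfn : (fun s => F ((y, t).1, s))
        = (fun s => hfun d lam c r r (c^2*s^2 + (-‖y‖^2))) := by
      funext s
      rw [hF]
      beta_reduce
      apply congrArg
      show c^2*s^2 - ‖y‖^2 = _
      ring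
    have harg : c^2*t^2 + (-‖y‖^2) = X := by rw [hXdef]; ring
    rw [hfn]
    show iteratedDeriv 2 (fun s => hfun d lam c r r (c^2*s^2 + (-‖y‖^2))) t = _
    rw [slice_iteratedDeriv hd hlam hc r r (c^2) (-‖y‖^2) t (by rw [harg]; exact hX), harg]
  have hB : ∀ j : Fin d,
      iteratedDeriv 2 (fun s => F (WithLp.toLp 2 (Function.update (y, t).1 j s), (y, t).2)) ((y, t).1 j)
      = hfun d lam c (r+2) r X * (4*(y j)^2) + hfun d lam c (r+1) r X * (-2) := by
    intro j
    have hfn : (fun s => F (WithLp.toLp 2 (Function.update (y, t).1 j s), (y, t).2))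
        = (fun s => hfun d lam c r r ((-1)*s^2 + (c^2*t^2 - ‖y‖^2 + (y j)^2))) := by
      funext s
      rw [hF]
      beta_reduce
      apply congrArg
      have hup := norm_sq_update y ((WithLp.toLp 2 (Function.update (y, t).1 j s), (y, t).2).1) j s
        (fun i => Function.update_apply y j s i)
      rw [hup]
      show c^2*t^2 - (‖y‖^2 - (y j)^2 + s^2) = _
      ring
    have harg : (-1)*(y j)^2 + (c^2*t^2 - ‖y‖^2 + (y j)^2) = X := by rw [hXdef]; ring
    rw [hfn]
    show iteratedDeriv 2 _ (y j) = _
    rw [slice_iteratedDeriv hd hlam hc r r (-1) (c^2*t^2 - ‖y‖^2 + (y j)^2) (y j)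
      (by rw [harg]; exact hX), harg]
    ring_nf
  have hsum : ∑ j : Fin d,
      iteratedDeriv 2 (fun s => F (WithLp.toLp 2 (Function.update (y, t).1 j s), (y, t).2)) ((y, t).1 j)
      = 4 * hfun d lam c (r+2) r X * ‖y‖^2 - 2*(d:ℝ) * hfun d lam c (r+1) r X := by
    rw [Finset.sum_congr rfl (fun j _ => hB j), Finset.sum_add_distrib, Finset.sum_const,
      Finset.card_univ, Fintype.card_fin]
    have h1 : ∑ j : Fin d, hfun d lam c (r+2) r X * (4*(y j)^2)
        = 4 * hfun d lam c (r+2) r X * ‖y‖^2 := by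
      rw [norm_sq_eq y, Finset.mul_sum]
      exact Finset.sum_congr rfl (fun j _ => by ring)
    rw [h1]
    push_cast
    ring
  rw [hA, hsum]
  have hfeq := hfun_functional hd hlam hc r hX
  nlinarith [hfeq]
end m

section m
variable {d : ℕ} {lam c : ℝ}

lemma cone_pos {y : EuclideanSpace ℝ (Fin d)} {t : ℝ} (hc : 0 < c) (ht : 0 < t)
    (hyt : ‖y‖ < c*t) : 0 < c^2*t^2 - ‖y‖^2 := by
  nlinarith [norm_nonneg y]

lemma iterate_dAlembert (hd : 3 ≤ d) (hlam : 0 < lam) (hc : 0 < c)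
    {f : EuclideanSpace ℝ (Fin d) × ℝ → ℝ}
    (hf2 : ∀ p : EuclideanSpace ℝ (Fin d) × ℝ,
      f p = hfun d lam c 0 0 (c^2*p.2^2 - ‖p.1‖^2)) :
    ∀ n : ℕ, ∀ y : EuclideanSpace ℝ (Fin d), ∀ t : ℝ, 0 < t → ‖y‖ < c*t →
      (dAlembert d c)^[n] f (y, t)
        = (4*c^2)^n * hfun d lam c (n:ℝ) (n:ℝ) (c^2*t^2 - ‖y‖^2) := by
  intro n
  induction n with
  | zero =>
    intro y t ht hyt
    simpa using hf2 (y, t)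
  | succ n ih =>
    intro y t ht hyt
    rw [Function.iterate_succ_apply']
    set v : EuclideanSpace ℝ (Fin d) × ℝ → ℝ :=
      fun p => (4*c^2)^n * hfun d lam c (n:ℝ) (n:ℝ) (c^2*p.2^2 - ‖p.1‖^2) with hv
    have hS : IsOpen {p : EuclideanSpace ℝ (Fin d) × ℝ | 0 < p.2 ∧ ‖p.1‖ < c*p.2} := by
      apply IsOpen.inter
      · exact isOpen_lt continuous_const continuous_snd
      · exact isOpen_lt continuous_fst.norm (continuous_snd.const_smul c)
    have hmem : (y, t) ∈ {p : EuclideanSpace ℝ (Fin d) × ℝ | 0 < p.2 ∧ ‖p.1‖ < c*p.2} :=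
      ⟨ht, hyt⟩
    have hEv : (dAlembert d c)^[n] f =ᶠ[nhds (y, t)] v := by
      apply Filter.eventually_of_mem (hS.mem_nhds hmem)
      intro p hp
      have := ih p.1 p.2 hp.1 hp.2
      rwa [Prod.mk.eta] at this
    rw [dAlembert_congr hEv, hv, dAlembert_const_mul,
      dAlembert_hfun hd hlam hc (n:ℝ) y t (cone_pos hc ht hyt)]
    have hcast : ((n:ℝ)+1) = (((n+1:ℕ)):ℝ) := by push_cast; ring
    rw [hcast, pow_succ]
    ring
end m

section fin
variable {d : ℕ} {lam c : ℝ}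

lemma hfun_final (hd : 3 ≤ d) (hlam : 0 < lam) (hc : 0 < c) {x : ℝ} (hx : 0 < x) :
    (4*c^2)^(d-2) * hfun d lam c ((d:ℝ)-2) ((d:ℝ)-2) x
      = lam^(2*(d-2)) * hfun d lam c 0 0 x
        + (2*lam*c)^(d-2) * x^(-(d:ℝ)/2) / (Real.sqrt π * Real.Gamma (1 - (d:ℝ)/2)) := by
  set C : ℝ := (lam/(2*c))^(d-2) with hC
  have hsum : Summable (fun k => hterm d lam c ((d:ℝ)-2) ((d:ℝ)-2) k x) :=
    hterm_summable hd hlam hc _ _ hx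
  have hsum1 : Summable (fun k => hterm d lam c ((d:ℝ)-2) ((d:ℝ)-2) (k+1) x) :=
    (summable_nat_add_iff 1).2 hsum
  have e0 : hterm d lam c ((d:ℝ)-2) ((d:ℝ)-2) 0 x
      = C * x^(-(d:ℝ)/2) * ((Real.Gamma (1 - (d:ℝ)/2))⁻¹ * (Real.Gamma (1/2))⁻¹) := by
    rw [hterm]
    have a1 : (((0:ℕ):ℝ)+1)*((d:ℝ)/2-1) - 1 - ((d:ℝ)-2) = -(d:ℝ)/2 := by push_cast; ring
    have a2 : (((0:ℕ):ℝ)+1)*((d:ℝ)/2-1) - ((d:ℝ)-2) = 1 - (d:ℝ)/2 := by push_cast; ring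
    have a3 : ((d:ℝ)-1)/2 + (((0:ℕ):ℝ)+1)*((d:ℝ)/2-1) - ((d:ℝ)-2) = 1/2 := by push_cast; ring
    rw [a1, a2, a3, pow_one]
  have e1 : hterm d lam c ((d:ℝ)-2) ((d:ℝ)-2) 1 x = 0 := by
    rw [hterm]
    have a2 : (((1:ℕ):ℝ)+1)*((d:ℝ)/2-1) - ((d:ℝ)-2) = 0 := by push_cast; ring
    rw [a2, Real.Gamma_zero, inv_zero, zero_mul, mul_zero]
  have e2 : ∀ k : ℕ, hterm d lam c ((d:ℝ)-2) ((d:ℝ)-2) (k+2) x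
      = C^2 * hterm d lam c 0 0 k x := by
    intro k
    rw [hterm, hterm]
    have a1 : (((k+2:ℕ):ℝ)+1)*((d:ℝ)/2-1) - 1 - ((d:ℝ)-2)
        = ((k:ℝ)+1)*((d:ℝ)/2-1) - 1 - 0 := by push_cast; ring
    have a2 : (((k+2:ℕ):ℝ)+1)*((d:ℝ)/2-1) - ((d:ℝ)-2)
        = ((k:ℝ)+1)*((d:ℝ)/2-1) - 0 := by push_cast; ring
    have a3 : ((d:ℝ)-1)/2 + (((k+2:ℕ):ℝ)+1)*((d:ℝ)/2-1) - ((d:ℝ)-2)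
        = ((d:ℝ)-1)/2 + ((k:ℝ)+1)*((d:ℝ)/2-1) - 0 := by push_cast; ring
    rw [a1, a2, a3]
    have : C^(k+2+1) = C^2 * C^(k+1) := by rw [← pow_add]; ring_nf
    rw [this]
    ring
  have hsplit : hfun d lam c ((d:ℝ)-2) ((d:ℝ)-2) x
      = hterm d lam c ((d:ℝ)-2) ((d:ℝ)-2) 0 x + (hterm d lam c ((d:ℝ)-2) ((d:ℝ)-2) 1 x
        + C^2 * hfun d lam c 0 0 x) := by
    rw [hfun, Summable.tsum_eq_zero_add hsum, Summable.tsum_eq_zero_add hsum1]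
    congr 1
    congr 1
    rw [show (∑' k : ℕ, hterm d lam c ((d:ℝ)-2) ((d:ℝ)-2) (k+1+1) x)
      = ∑' k : ℕ, C^2 * hterm d lam c 0 0 k x from
        tsum_congr (fun k => by rw [show k+1+1 = k+2 from rfl, e2 k]),
      tsum_mul_left, hfun]
  rw [hsplit, e0, e1]
  have key1 : (4*c^2)^(d-2) * C^2 = lam^(2*(d-2)) := by
    rw [hC, pow_right_comm, ← mul_pow, pow_mul]
    congr 1
    field_simp
    ring
  have key2 : (4*c^2)^(d-2) * C = (2*lam*c)^(d-2) := by
    rw [hC, ← mul_pow]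
    congr 1
    field_simp
    ring
  have hgam : Real.Gamma (1/2) = Real.sqrt π := Real.Gamma_one_half_eq
  rw [hgam]
  linear_combination (hfun d lam c 0 0 x) * key1
    + (x^(-(d:ℝ)/2) * (Real.Gamma (1 - (d:ℝ)/2))⁻¹ * (Real.sqrt π)⁻¹) * key2
end fin

theorem statement1 (d : ℕ) (hd : 3 ≤ d) (lam c : ℝ) (hlam : 0 < lam) (hc : 0 < c)
    (f : EuclideanSpace ℝ (Fin d) × ℝ → ℝ)
    (hf : ∀ (y : EuclideanSpace ℝ (Fin d)) (t : ℝ), f (y, t) =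
      ∑' k : ℕ,
        (lam / (2 * c)) ^ ((k + 1) * (d - 2)) *
          (c ^ 2 * t ^ 2 - ‖y‖ ^ 2) ^ (((((k : ℝ) + 1) * ((d : ℝ) - 2)) - 2) / 2) /
          (Real.Gamma (((k : ℝ) + 1) * ((d : ℝ) / 2 - 1)) *
            Real.Gamma (((d : ℝ) - 1) / 2 + ((d : ℝ) / 2 - 1) * ((k : ℝ) + 1)))) :
    ∀ (y : EuclideanSpace ℝ (Fin d)) (t : ℝ), 0 < t → ‖y‖ < c * t →
      (dAlembert d c)^[d - 2] f (y, t) =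
        lam ^ (2 * (d - 2)) * f (y, t) +
          (2 * lam * c) ^ (d - 2) *
            (c ^ 2 * t ^ 2 - ‖y‖ ^ 2) ^ (-(d : ℝ) / 2) /
            (Real.sqrt π * Real.Gamma (1 - (d : ℝ) / 2)) := by
  have hdR : ((d:ℝ)) = ((d:ℕ):ℝ) := rfl
  -- f equals the hfun composition everywhere
  have hf2 : ∀ p : EuclideanSpace ℝ (Fin d) × ℝ,
      f p = hfun d lam c 0 0 (c^2*p.2^2 - ‖p.1‖^2) := by
    intro p
    rw [← Prod.mk.eta (p := p), hf p.1 p.2, hfun]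
    apply tsum_congr
    intro k
    rw [hterm]
    have hpow : (lam / (2 * c)) ^ ((k + 1) * (d - 2))
        = ((lam/(2*c))^(d-2))^(k+1) := by
      rw [← pow_mul, Nat.mul_comm]
    have hexp : (((((k : ℝ) + 1) * ((d : ℝ) - 2)) - 2) / 2)
        = ((k:ℝ)+1)*((d:ℝ)/2-1) - 1 - 0 := by ring
    have ha1 : ((k:ℝ)+1)*((d:ℝ)/2-1) - 0 = ((k : ℝ) + 1) * ((d : ℝ) / 2 - 1) := by ring
    have ha2 : ((d:ℝ)-1)/2 + ((k:ℝ)+1)*((d:ℝ)/2-1) - 0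
        = ((d : ℝ) - 1) / 2 + ((d : ℝ) / 2 - 1) * ((k : ℝ) + 1) := by ring
    rw [hpow, hexp, ha1, ha2, div_eq_mul_inv, mul_inv]
  intro y t ht hyt
  have hX : 0 < c^2*t^2 - ‖y‖^2 := cone_pos hc ht hyt
  rw [iterate_dAlembert hd hlam hc hf2 (d-2) y t ht hyt]
  have hcast : (((d-2:ℕ)):ℝ) = (d:ℝ) - 2 := by
    rw [Nat.cast_sub (by omega : 2 ≤ d)]
    norm_num
  rw [hcast, hfun_final hd hlam hc hX, hf2 (y, t)]
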